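/- Let Γ be a group acting measurably on a measure space (X,ν) and S ⊆ Γ a finite symmetric subset containing the identity. If the action is α-expanding (for every measurable A with ν(A) finite and ν(A) ≤ ν(X)/2 one has ν(S·A) ≥ (1+α)ν(A)), then for every measurable set A with finite measure and ν(A) > ν(X)/2 (with ν(X) finite), ν((S·A)∖A) ≥ (α/(1+α))(ν(X) − ν(A)). -/

import Mathlib

open MeasureTheory Pointwise

/-- If a measurable action of `Γ` on `(X,ν)` is `α`-expanding, then for every measurable
set `A` of finite measure with `ν(A) > ν(X)/2` (and `ν(X)` finite),
`ν((S·A) \ A) ≥ (α/(1+α))(ν(X) − ν(A))`. -/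
theorem expansion_above_half {Γ X : Type*} [Group Γ] [MulAction Γ X]
    [MeasurableSpace X] (ν : Measure X)
    (hmeas : ∀ (g : Γ) (A : Set X), MeasurableSet A → MeasurableSet (g • A))
    (S : Finset Γ) (hS1 : (1 : Γ) ∈ S) (hSsymm : ∀ s ∈ S, s⁻¹ ∈ S)
    (α : ℝ) (hα : 0 < α)
    (hexp : ∀ A : Set X, MeasurableSet A → ν A ≠ ⊤ → 2 * ν A ≤ ν Set.univ →
      ENNReal.ofReal (1 + α) * ν A ≤ ν (⋃ s ∈ S, s • A))
    (hXfin : ν Set.univ ≠ ⊤)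
    (A : Set X) (hA : MeasurableSet A) (hAfin : ν A ≠ ⊤)
    (hAbig : ν Set.univ < 2 * ν A) :
    ENNReal.ofReal (α / (1 + α)) * (ν Set.univ - ν A)
      ≤ ν ((⋃ s ∈ S, s • A) \ A) := by
  set SA : Set X := ⋃ s ∈ S, s • A with hSA
  set C : Set X := SAᶜ with hC
  set SC : Set X := ⋃ s ∈ S, s • C with hSC
  have hSAmeas : MeasurableSet SA := by
    exact MeasurableSet.biUnion S.countable_toSet (fun s _ => hmeas s A hA)
  have hCmeas : MeasurableSet C := hSAmeas.compl
  have hASA : A ⊆ SA := by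
    intro x hx
    exact Set.mem_biUnion hS1 (by simpa using hx)
  -- C disjoint from A
  have hCA : Disjoint A C := by
    rw [Set.disjoint_compl_right_iff_subset]; exact hASA
  have hCfin : ν C ≠ ⊤ := (lt_of_le_of_lt (measure_mono (Set.subset_univ _)) hXfin.lt_top).ne
  have hsum : ν A + ν C ≤ ν Set.univ := by
    rw [← measure_union hCA hCmeas]
    exact measure_mono (Set.subset_univ _)
  have hCltA : ν C < ν A := by
    by_contra h
    push_neg at h
    have : 2 * ν A ≤ ν A + ν C := by rw [two_mul]; exact add_le_add_right h _
    exact absurd (this.trans hsum) (not_le.mpr hAbig)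
  have h2C : 2 * ν C ≤ ν Set.univ := by
    calc 2 * ν C = ν C + ν C := two_mul _
    _ ≤ ν A + ν C := add_le_add_left hCltA.le _
    _ ≤ ν Set.univ := hsum
  have hexpC := hexp C hCmeas hCfin h2C
  -- SC \ C ⊆ SA \ A
  have hsub : SC \ C ⊆ SA \ A := by
    rintro x ⟨hx1, hx2⟩
    constructor
    · simpa [hC] using hx2
    · intro hxA
      simp only [hSC, Set.mem_iUnion] at hx1
      obtain ⟨s, hs, hx⟩ := hx1
      obtain ⟨c, hc, rfl⟩ := hx
      apply hc
      exact Set.mem_biUnion (hSsymm s hs) ⟨s • c, hxA, by simp⟩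
  set D : Set X := SA \ A with hD
  have hDC : ν SC ≤ ν D + ν C := by
    calc ν SC ≤ ν ((SC \ C) ∪ C) := measure_mono (by intro x hx; by_cases h : x ∈ C <;> simp [hx, h])
    _ ≤ ν (SC \ C) + ν C := measure_union_le _ _
    _ ≤ ν D + ν C := add_le_add_left (measure_mono hsub) _
  have hofadd : ENNReal.ofReal (1 + α) = 1 + ENNReal.ofReal α := by
    rw [ENNReal.ofReal_add one_pos.le hα.le, ENNReal.ofReal_one]
  have hαC : ENNReal.ofReal α * ν C ≤ ν D := by
    have h1 : ν C + ENNReal.ofReal α * ν C ≤ ν D + ν C := by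
      calc ν C + ENNReal.ofReal α * ν C = ENNReal.ofReal (1 + α) * ν C := by
            rw [hofadd, add_mul, one_mul]
      _ ≤ ν SC := hexpC
      _ ≤ ν D + ν C := hDC
    rw [add_comm (ν D)] at h1
    exact ENNReal.le_of_add_le_add_left hCfin h1
  have hCleD : ν C ≤ ENNReal.ofReal α⁻¹ * ν D := by
    calc ν C = ENNReal.ofReal α⁻¹ * (ENNReal.ofReal α * ν C) := by
          rw [← mul_assoc, ← ENNReal.ofReal_mul (by positivity), inv_mul_cancel₀ hα.ne',
            ENNReal.ofReal_one, one_mul]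
    _ ≤ ENNReal.ofReal α⁻¹ * ν D := by gcongr
  have hcover : ν Set.univ ≤ ν A + (ν D + ν C) := by
    calc ν Set.univ ≤ ν (A ∪ (D ∪ C)) := measure_mono (by
          intro x _
          by_cases h1 : x ∈ A
          · exact Or.inl h1
          · by_cases h2 : x ∈ SA
            · exact Or.inr (Or.inl ⟨h2, h1⟩)
            · exact Or.inr (Or.inr h2))
    _ ≤ ν A + ν (D ∪ C) := measure_union_le _ _
    _ ≤ ν A + (ν D + ν C) := by gcongr; exact measure_union_le _ _
  have hkey : ν Set.univ - ν A ≤ ENNReal.ofReal ((1 + α) / α) * ν D := by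
    rw [tsub_le_iff_right]
    calc ν Set.univ ≤ ν A + (ν D + ν C) := hcover
    _ ≤ ν A + (ν D + ENNReal.ofReal α⁻¹ * ν D) := by gcongr
    _ = ENNReal.ofReal ((1 + α) / α) * ν D + ν A := by
        have h1 : (1 : ENNReal) + ENNReal.ofReal α⁻¹ = ENNReal.ofReal ((1 + α) / α) := by
          rw [← ENNReal.ofReal_one, ← ENNReal.ofReal_add one_pos.le (by positivity)]
          congr 1
          field_simp
          ring
        rw [add_comm, ← h1, add_mul, one_mul]
  calc ENNReal.ofReal (α / (1 + α)) * (ν Set.univ - ν A)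
      ≤ ENNReal.ofReal (α / (1 + α)) * (ENNReal.ofReal ((1 + α) / α) * ν D) := by gcongr
  _ = ν D := by
      rw [← mul_assoc, ← ENNReal.ofReal_mul (by positivity)]
      have : α / (1 + α) * ((1 + α) / α) = 1 := by
        field_simp
      rw [this, ENNReal.ofReal_one, one_mul]
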